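/- If λx.M ⇒_E N, then for each i ∈ {1,2} there exists a term Q such that πᵢN →_R* λx.πᵢQ and M ⇒_E Q. -/

import Mathlib

/-- Untyped lambda terms with pairing and projections, de Bruijn representation
(so terms are automatically identified up to alpha-equivalence). -/
inductive Tm : Type
  | var : Nat → Tm
  | app : Tm → Tm → Tm
  | lam : Tm → Tm
  | pair : Tm → Tm → Tm
  | p1 : Tm → Tm
  | p2 : Tm → Tm

/-- Shift free de Bruijn indices ≥ d up by one. -/
def Tm.lift (d : Nat) : Tm → Tm
  | .var n => if n < d then .var n else .var (n + 1)
  | .app a b => .app (a.lift d) (b.lift d)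
  | .lam a => .lam (a.lift (d + 1))
  | .pair a b => .pair (a.lift d) (b.lift d)
  | .p1 a => .p1 (a.lift d)
  | .p2 a => .p2 (a.lift d)

/-- Capture-avoiding substitution of s for variable k. -/
def Tm.subst : Tm → Nat → Tm → Tm
  | .var n, k, s => if n = k then s else if n < k then .var n else .var (n - 1)
  | .app a b, k, s => .app (a.subst k s) (b.subst k s)
  | .lam a, k, s => .lam (a.subst (k + 1) (s.lift 0))
  | .pair a b, k, s => .pair (a.subst k s) (b.subst k s)
  | .p1 a, k, s => .p1 (a.subst k s)
  | .p2 a, k, s => .p2 (a.subst k s)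

/-- One-step R-reduction: compatible closure of (β), (π₁), (π₂), (δπ), (π₁λ), (π₂λ). -/
inductive StepR : Tm → Tm → Prop
  | beta {M N} : StepR (.app (.lam M) N) (M.subst 0 N)
  | pi1 {M N} : StepR (.p1 (.pair M N)) M
  | pi2 {M N} : StepR (.p2 (.pair M N)) N
  | dpi {M N P} : StepR (.app (.pair M N) P) (.pair (.app M P) (.app N P))
  | pi1lam {M} : StepR (.p1 (.lam M)) (.lam (.p1 M))
  | pi2lam {M} : StepR (.p2 (.lam M)) (.lam (.p2 M))
  | lam {M M'} : StepR M M' → StepR (.lam M) (.lam M')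
  | appL {M M' N} : StepR M M' → StepR (.app M N) (.app M' N)
  | appR {M N N'} : StepR N N' → StepR (.app M N) (.app M N')
  | pairL {M M' N} : StepR M M' → StepR (.pair M N) (.pair M' N)
  | pairR {M N N'} : StepR N N' → StepR (.pair M N) (.pair M N')
  | p1 {M M'} : StepR M M' → StepR (.p1 M) (.p1 M')
  | p2 {M M'} : StepR M M' → StepR (.p2 M) (.p2 M')

/-- Parallel η/SP-expansion. -/
inductive ParE : Tm → Tm → Prop
  | refl {M} : ParE M M
  | lam {M M'} : ParE M M' → ParE (.lam M) (.lam M')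
  | app {M M' N N'} : ParE M M' → ParE N N' → ParE (.app M N) (.app M' N')
  | pair {M M' N N'} : ParE M M' → ParE N N' → ParE (.pair M N) (.pair M' N')
  | p1 {M M'} : ParE M M' → ParE (.p1 M) (.p1 M')
  | p2 {M M'} : ParE M M' → ParE (.p2 M) (.p2 M')
  | eta {M M'} : ParE M M' → ParE M (.lam (.app (M'.lift 0) (.var 0)))
  | sp {M M'} : ParE M M' → ParE M (.pair (.p1 M') (.p2 M'))

open Relation

theorem Tm.lift_lift (s : Tm) : ∀ i j, i ≤ j → (s.lift j).lift i = (s.lift i).lift (j+1) := by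
  induction s with
  | var n =>
    intro i j hij
    simp only [Tm.lift]
    split_ifs <;> simp_all [Tm.lift] <;> (try split_ifs) <;> first | rfl | omega
  | lam a ih => intro i j hij; simp [Tm.lift, ih (i+1) (j+1) (by omega)]
  | app a b iha ihb => intro i j hij; simp [Tm.lift, iha _ _ hij, ihb _ _ hij]
  | pair a b iha ihb => intro i j hij; simp [Tm.lift, iha _ _ hij, ihb _ _ hij]
  | p1 a ih => intro i j hij; simp [Tm.lift, ih _ _ hij]
  | p2 a ih => intro i j hij; simp [Tm.lift, ih _ _ hij]

theorem Tm.lift_subst (P : Tm) : ∀ (s : Tm) (j d : Nat), j ≤ d →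
    (P.subst j s).lift d = (P.lift (d+1)).subst j (s.lift d) := by
  induction P with
  | var n =>
    intro s j d hjd
    simp only [Tm.subst, Tm.lift]
    rcases lt_trichotomy n j with h | h | h
    · rw [if_neg (by omega), if_pos h, if_pos (by omega : n < d+1)]
      simp [Tm.lift, Tm.subst, if_pos (by omega : n < d), if_neg (by omega : ¬ n = j), if_pos h]
    · subst h; rw [if_pos rfl, if_pos (by omega : n < d+1)]; simp [Tm.subst]
    · rw [if_neg (by omega), if_neg (by omega)]
      by_cases hn : n < d + 1
      · rw [if_pos hn]
        simp only [Tm.lift, Tm.subst, if_pos (by omega : n - 1 < d),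
          if_neg (by omega : ¬ n = j), if_neg (by omega : ¬ n < j)]
      · rw [if_neg hn]
        simp only [Tm.lift, Tm.subst, if_neg (by omega : ¬ n - 1 < d),
          if_neg (by omega : ¬ n + 1 = j), if_neg (by omega : ¬ n + 1 < j), Tm.var.injEq]
        omega
  | lam a ih =>
    intro s j d hjd
    simp only [Tm.subst, Tm.lift, Tm.lam.injEq]
    rw [ih (s.lift 0) (j+1) (d+1) (by omega), Tm.lift_lift s 0 d (by omega)]
  | app a b iha ihb => intro s j d h; simp [Tm.subst, Tm.lift, iha _ _ _ h, ihb _ _ _ h]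
  | pair a b iha ihb => intro s j d h; simp [Tm.subst, Tm.lift, iha _ _ _ h, ihb _ _ _ h]
  | p1 a ih => intro s j d h; simp [Tm.subst, Tm.lift, ih _ _ _ h]
  | p2 a ih => intro s j d h; simp [Tm.subst, Tm.lift, ih _ _ _ h]

theorem Tm.subst_lift (t : Tm) : ∀ d, (t.lift (d+1)).subst d (.var d) = t := by
  induction t with
  | var n =>
    intro d
    simp only [Tm.lift, Tm.subst]
    split_ifs <;> simp_all [Tm.subst] <;> split_ifs <;> first | rfl | omega | (simp; omega)
  | lam a ih =>
    intro d
    simp only [Tm.lift, Tm.subst, Tm.lam.injEq]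
    rw [if_neg (by omega : ¬ d < 0)]
    exact ih (d+1)
  | app a b iha ihb => intro d; simp [Tm.subst, Tm.lift, iha d, ihb d]
  | pair a b iha ihb => intro d; simp [Tm.subst, Tm.lift, iha d, ihb d]
  | p1 a ih => intro d; simp [Tm.subst, Tm.lift, ih d]
  | p2 a ih => intro d; simp [Tm.subst, Tm.lift, ih d]

theorem StepR.lift {a b : Tm} (h : StepR a b) : ∀ d, StepR (a.lift d) (b.lift d) := by
  induction h with
  | @beta P Q =>
    intro d
    have := @StepR.beta (P.lift (d+1)) (Q.lift d)
    rwa [← Tm.lift_subst P Q 0 d (by omega)] at this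
  | pi1 => intro d; exact .pi1
  | pi2 => intro d; exact .pi2
  | dpi => intro d; exact .dpi
  | pi1lam => intro d; exact .pi1lam
  | pi2lam => intro d; exact .pi2lam
  | lam _ ih => intro d; exact .lam (ih (d+1))
  | appL _ ih => intro d; exact .appL (ih d)
  | appR _ ih => intro d; exact .appR (ih d)
  | pairL _ ih => intro d; exact .pairL (ih d)
  | pairR _ ih => intro d; exact .pairR (ih d)
  | p1 _ ih => intro d; exact .p1 (ih d)
  | p2 _ ih => intro d; exact .p2 (ih d)

/-- The main strengthened induction. -/
theorem parE_lam_key (M : Tm) : ∀ {L N : Tm}, ParE L N → L = .lam M →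
    (∃ Q, ParE M Q ∧ ReflTransGen StepR (.p1 N) (.lam (.p1 Q)) ∧
      ReflTransGen StepR (.p2 N) (.lam (.p2 Q))) ∧
    (∃ Q, ParE M Q ∧ ReflTransGen StepR (.app (N.lift 0) (.var 0)) Q) := by
  intro L N h
  induction h with
  | @refl P =>
    rintro rfl
    refine ⟨⟨M, .refl, .single .pi1lam, .single .pi2lam⟩, ⟨M, .refl, ?_⟩⟩
    have hb := @StepR.beta (M.lift 1) (.var 0)
    rw [Tm.subst_lift M 0] at hb
    exact .single hb
  | @lam P P' hP _ =>
    intro hL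
    cases hL
    refine ⟨⟨P', hP, .single .pi1lam, .single .pi2lam⟩, ⟨P', hP, ?_⟩⟩
    have hb := @StepR.beta (P'.lift 1) (.var 0)
    rw [Tm.subst_lift P' 0] at hb
    exact .single hb
  | app _ _ _ _ => intro hL; cases hL
  | pair _ _ _ _ => intro hL; cases hL
  | p1 _ _ => intro hL; cases hL
  | p2 _ _ => intro hL; cases hL
  | @eta P P' hP ih =>
    intro hL
    obtain ⟨_, ⟨Qc, hQc, hc⟩⟩ := ih hL
    have hb := @StepR.beta ((Tm.app (P'.lift 0) (.var 0)).lift 1) (.var 0)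
    rw [Tm.subst_lift _ 0] at hb
    refine ⟨⟨Qc, hQc, ?_, ?_⟩, ⟨Qc, hQc, ?_⟩⟩
    · exact .head .pi1lam (hc.lift (fun t => Tm.lam (Tm.p1 t)) (fun _ _ h => StepR.lam (StepR.p1 h)))
    · exact .head .pi2lam (hc.lift (fun t => Tm.lam (Tm.p2 t)) (fun _ _ h => StepR.lam (StepR.p2 h)))
    · exact .head hb hc
  | @sp P P' hP ih =>
    intro hL
    obtain ⟨⟨Q, hQ, h1, h2⟩, _⟩ := ih hL
    refine ⟨⟨Q, hQ, .head .pi1 h1, .head .pi2 h2⟩,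
      ⟨.pair (.p1 Q) (.p2 Q), .sp hQ, .head .dpi ?_⟩⟩
    have lift1 : ReflTransGen StepR (Tm.app (Tm.p1 (P'.lift 0)) (.var 0)) (.p1 Q) := by
      have hl : ReflTransGen StepR ((Tm.p1 P').lift 0) ((Tm.lam (Tm.p1 Q)).lift 0) :=
        h1.lift (fun t => t.lift 0) (fun _ _ h => StepR.lift h 0)
      have := hl.lift (fun t => Tm.app t (Tm.var 0)) (fun _ _ h => StepR.appL h)
      refine this.trans (.single ?_)
      have hb := @StepR.beta ((Tm.p1 Q).lift 1) (.var 0)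
      rwa [Tm.subst_lift _ 0] at hb
    have lift2 : ReflTransGen StepR (Tm.app (Tm.p2 (P'.lift 0)) (.var 0)) (.p2 Q) := by
      have hl : ReflTransGen StepR ((Tm.p2 P').lift 0) ((Tm.lam (Tm.p2 Q)).lift 0) :=
        h2.lift (fun t => t.lift 0) (fun _ _ h => StepR.lift h 0)
      have := hl.lift (fun t => Tm.app t (Tm.var 0)) (fun _ _ h => StepR.appL h)
      refine this.trans (.single ?_)
      have hb := @StepR.beta ((Tm.p2 Q).lift 1) (.var 0)
      rwa [Tm.subst_lift _ 0] at hb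
    exact (lift1.lift (fun t => Tm.pair t (Tm.app (Tm.p2 (P'.lift 0)) (.var 0)))
        (fun _ _ h => StepR.pairL h)).trans
      (lift2.lift (fun t => Tm.pair (Tm.p1 Q) t) (fun _ _ h => StepR.pairR h))

/-- If λx.M ⇒_E N then for each i ∈ {1,2} there is Q with πᵢN →_R* λx.πᵢQ and M ⇒_E Q. -/
theorem parE_lam_proj (M N : Tm) (h : ParE (.lam M) N) :
    (∃ Q, Relation.ReflTransGen StepR (.p1 N) (.lam (.p1 Q)) ∧ ParE M Q) ∧
    (∃ Q, Relation.ReflTransGen StepR (.p2 N) (.lam (.p2 Q)) ∧ ParE M Q) := by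
  obtain ⟨⟨Q, hQ, h1, h2⟩, _⟩ := parE_lam_key M h rfl
  exact ⟨⟨Q, h1, hQ⟩, ⟨Q, h2, hQ⟩⟩
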